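/- Let H be a real Hilbert space and F : H → ℝ differentiable with gradient ∇F satisfying ⟨∇F(x) − ∇F(y), x − y⟩ ≥ μ‖x − y‖² and ‖∇F(x) − ∇F(y)‖ ≤ L‖x − y‖ for all x, y ∈ H, with 0 < μ ≤ L, and let z* be the (unique) point with ∇F(z*) = 0. Let (Ω, 𝔉, P) be a probability space with a filtration (𝔉_k)_{k∈ℕ}, let z₀ ∈ H be deterministic, and let (z_k)_{k∈ℕ} and (g_k)_{k∈ℕ} be sequences of square-integrable H-valued random variables such that: z_k is 𝔉_k-measurable, z_{k+1} = z_k − α g_k pointwise, and E[‖g_k − ∇F(z_k)‖² | 𝔉_k] ≤ θ² ‖∇F(z_k)‖² P-a.s. for every k. If α ∈ (0, 2/(μ + L)] and 0 ≤ θ < μ/L, then with ϱ := 1 − α(μ − θL) one has ϱ ∈ [0, 1) and the iterates converge linearly in expectation: E[‖z_k − z*‖] ≤ ϱ^k ‖z₀ − z*‖ for all k ∈ ℕ. -/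

import Mathlib

open MeasureTheory
open scoped RealInnerProductSpace ENNReal

namespace AdaptiveSamplingAux
section calc1

variable {H : Type*} [NormedAddCommGroup H] [InnerProductSpace ℝ H] [CompleteSpace H]

lemma line_deriv {F : H → ℝ} {Fgrad : H → H} (hF : ∀ x, HasGradientAt F (Fgrad x) x)
    (x v : H) (t : ℝ) :
    HasDerivAt (fun s : ℝ => F (x + s • v)) ⟪Fgrad (x + t • v), v⟫ t := by
  have h1 : HasDerivAt (fun s : ℝ => x + s • v) v t := by
    simpa using ((hasDerivAt_id t).smul_const v).const_add x
  have h2 := (hF (x + t • v)).hasFDerivAt.comp_hasDerivAt t h1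
  simp [InnerProductSpace.toDual_apply_apply] at h2; exact h2

lemma descent_lemma {F : H → ℝ} {Fgrad : H → H} (hF : ∀ x, HasGradientAt F (Fgrad x) x)
    {L : ℝ} (hlip : ∀ x y : H, ‖Fgrad x - Fgrad y‖ ≤ L * ‖x - y‖) (x y : H) :
    F y ≤ F x + ⟪Fgrad x, y - x⟫ + L / 2 * ‖y - x‖ ^ 2 := by
  set v := y - x with hv
  set ψ : ℝ → ℝ := fun t => F (x + t • v) - t * ⟪Fgrad x, v⟫ - L * t ^ 2 / 2 * ‖v‖ ^ 2 with hψ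
  have hd : ∀ t : ℝ, HasDerivAt ψ (⟪Fgrad (x + t • v), v⟫ - ⟪Fgrad x, v⟫ - L * t * ‖v‖ ^ 2) t := by
    intro t
    have h1 := line_deriv hF x v t
    have h2 : HasDerivAt (fun t : ℝ => t * ⟪Fgrad x, v⟫) ⟪Fgrad x, v⟫ t := by
      simpa using (hasDerivAt_id t).mul_const ⟪Fgrad x, v⟫
    have h3 : HasDerivAt (fun t : ℝ => L * t ^ 2 / 2 * ‖v‖ ^ 2) (L * t * ‖v‖ ^ 2) t := by
      have : HasDerivAt (fun t : ℝ => t ^ 2) (2 * t) t := by simpa using hasDerivAt_pow 2 t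
      have := ((this.const_mul L).div_const 2).mul_const (‖v‖ ^ 2)
      exact this.congr_deriv (by ring)
    exact (h1.sub h2).sub h3
  have hanti : AntitoneOn ψ (Set.Icc 0 1) := by
    apply antitoneOn_of_deriv_nonpos (convex_Icc 0 1)
    · exact (fun t _ => ((hd t).continuousAt.continuousWithinAt))
    · exact fun t _ => ((hd t).differentiableAt.differentiableWithinAt)
    · intro t ht
      rw [interior_Icc] at ht
      rw [(hd t).deriv]
      have hb : ⟪Fgrad (x + t • v) - Fgrad x, v⟫ ≤ L * t * ‖v‖ ^ 2 := by
        calc ⟪Fgrad (x + t • v) - Fgrad x, v⟫ ≤ ‖Fgrad (x + t • v) - Fgrad x‖ * ‖v‖ :=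
              real_inner_le_norm _ _
          _ ≤ (L * ‖(x + t • v) - x‖) * ‖v‖ := by
              have := hlip (x + t • v) x
              nlinarith [norm_nonneg v]
          _ = L * t * ‖v‖ ^ 2 := by
              simp [norm_smul, abs_of_pos ht.1]; ring
      rw [inner_sub_left] at hb
      linarith
  have := hanti (Set.mem_Icc.2 ⟨le_refl 0, zero_le_one⟩) (Set.mem_Icc.2 ⟨zero_le_one, le_refl 1⟩) zero_le_one
  simp only [hψ, zero_smul, add_zero, one_smul, zero_pow, mul_zero, zero_mul, sub_zero, one_pow,
    mul_one, one_mul] at this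
  have hx1 : x + v = y := by rw [hv]; abel
  rw [hx1] at this
  linarith

lemma lower_lemma {F : H → ℝ} {Fgrad : H → H} (hF : ∀ x, HasGradientAt F (Fgrad x) x)
    {μc : ℝ} (hsc : ∀ x y : H, μc * ‖x - y‖ ^ 2 ≤ ⟪Fgrad x - Fgrad y, x - y⟫) (x y : H) :
    F x + ⟪Fgrad x, y - x⟫ + μc / 2 * ‖y - x‖ ^ 2 ≤ F y := by
  set v := y - x with hv
  set ψ : ℝ → ℝ := fun t => F (x + t • v) - t * ⟪Fgrad x, v⟫ - μc * t ^ 2 / 2 * ‖v‖ ^ 2 with hψ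
  have hd : ∀ t : ℝ, HasDerivAt ψ (⟪Fgrad (x + t • v), v⟫ - ⟪Fgrad x, v⟫ - μc * t * ‖v‖ ^ 2) t := by
    intro t
    have h1 := line_deriv hF x v t
    have h2 : HasDerivAt (fun t : ℝ => t * ⟪Fgrad x, v⟫) ⟪Fgrad x, v⟫ t := by
      simpa using (hasDerivAt_id t).mul_const ⟪Fgrad x, v⟫
    have h3 : HasDerivAt (fun t : ℝ => μc * t ^ 2 / 2 * ‖v‖ ^ 2) (μc * t * ‖v‖ ^ 2) t := by
      have : HasDerivAt (fun t : ℝ => t ^ 2) (2 * t) t := by simpa using hasDerivAt_pow 2 t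
      have := ((this.const_mul μc).div_const 2).mul_const (‖v‖ ^ 2)
      exact this.congr_deriv (by ring)
    exact (h1.sub h2).sub h3
  have hmono : MonotoneOn ψ (Set.Icc 0 1) := by
    apply monotoneOn_of_deriv_nonneg (convex_Icc 0 1)
    · exact (fun t _ => ((hd t).continuousAt.continuousWithinAt))
    · exact fun t _ => ((hd t).differentiableAt.differentiableWithinAt)
    · intro t ht
      rw [interior_Icc] at ht
      rw [(hd t).deriv]
      have hb : μc * t * ‖v‖ ^ 2 ≤ ⟪Fgrad (x + t • v) - Fgrad x, v⟫ := by
        have h0 := hsc (x + t • v) x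
        have he : (x + t • v) - x = t • v := by abel
        rw [he, real_inner_smul_right, norm_smul] at h0
        simp only [Real.norm_eq_abs, abs_of_pos ht.1] at h0
        nlinarith [ht.1]
      rw [inner_sub_left] at hb
      linarith
  have := hmono (Set.mem_Icc.2 ⟨le_refl 0, zero_le_one⟩) (Set.mem_Icc.2 ⟨zero_le_one, le_refl 1⟩) zero_le_one
  simp only [hψ, zero_smul, add_zero, one_smul, zero_pow, mul_zero, zero_mul, sub_zero, one_pow,
    mul_one, one_mul] at this
  have hx1 : x + v = y := by rw [hv]; abel
  rw [hx1] at this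
  linarith
end calc1

section calc2

variable {H : Type*} [NormedAddCommGroup H] [InnerProductSpace ℝ H]

lemma coco {h : H → ℝ} {G : H → H} {M : ℝ} (hM : 0 < M)
    (low : ∀ x y : H, h x + ⟪G x, y - x⟫ ≤ h y)
    (up : ∀ x y : H, h y ≤ h x + ⟪G x, y - x⟫ + M / 2 * ‖y - x‖ ^ 2) (x y : H) :
    ‖G x - G y‖ ^ 2 ≤ M * ⟪G x - G y, x - y⟫ := by
  have hM' : M ≠ 0 := ne_of_gt hM
  have key : ∀ a b : H, h a + ⟪G a, b - a⟫ + 1 / (2 * M) * ‖G b - G a‖ ^ 2 ≤ h b := by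
    intro a b
    set d := G b - G a with hd
    set c := b - (1 / M) • d with hc
    have h1 := low a c
    have h2 := up b c
    have e1 : c - a = (b - a) - (1 / M) • d := by rw [hc]; abel
    have e2 : c - b = -((1 / M) • d) := by rw [hc]; abel
    rw [e1, inner_sub_right, real_inner_smul_right] at h1
    rw [e2, inner_neg_right, real_inner_smul_right, norm_neg, norm_smul] at h2
    simp only [Real.norm_eq_abs, abs_of_pos (one_div_pos.2 hM)] at h2
    have e3 : ⟪G b, d⟫ - ⟪G a, d⟫ = ‖d‖ ^ 2 := by
      rw [← inner_sub_left, ← hd, real_inner_self_eq_norm_sq]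
    have e3' : 1 / M * ⟪G b, d⟫ - 1 / M * ⟪G a, d⟫ = 1 / M * ‖d‖ ^ 2 := by
      rw [← mul_sub, e3]
    have e4 : M / 2 * ((1 / M * ‖d‖) ^ 2) = 1 / (2 * M) * ‖d‖ ^ 2 := by
      field_simp
    have e7 : 1 / M * ‖d‖ ^ 2 - 1 / (2 * M) * ‖d‖ ^ 2 = 1 / (2 * M) * ‖d‖ ^ 2 := by
      field_simp; ring
    rw [e4] at h2
    linarith [h1, h2, e3', e7]
  have k1 := key x y
  have k2 := key y x
  have e5 : ‖G x - G y‖ = ‖G y - G x‖ := by rw [← neg_sub, norm_neg]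
  have e6 : ⟪G x, y - x⟫ + ⟪G y, x - y⟫ = -⟪G x - G y, x - y⟫ := by
    have hyx : y - x = -(x - y) := by abel
    rw [hyx, inner_neg_right, inner_sub_left]; ring
  have e8 : 1 / (2 * M) * ‖G y - G x‖ ^ 2 + 1 / (2 * M) * ‖G x - G y‖ ^ 2
      = 1 / M * ‖G x - G y‖ ^ 2 := by
    rw [← e5]; field_simp; ring
  have final : 1 / M * ‖G x - G y‖ ^ 2 ≤ ⟪G x - G y, x - y⟫ := by linarith
  calc ‖G x - G y‖ ^ 2 = M * (1 / M * ‖G x - G y‖ ^ 2) := by field_simp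
    _ ≤ M * ⟪G x - G y, x - y⟫ := by
        exact mul_le_mul_of_nonneg_left final hM.le

lemma combined {F : H → ℝ} {Fgrad : H → H}
    {μc L : ℝ} (hμc : 0 < μc) (hμL : μc ≤ L)
    (hsc : ∀ x y : H, μc * ‖x - y‖ ^ 2 ≤ ⟪Fgrad x - Fgrad y, x - y⟫)
    (hlip : ∀ x y : H, ‖Fgrad x - Fgrad y‖ ≤ L * ‖x - y‖)
    (hlow : ∀ x y : H, F x + ⟪Fgrad x, y - x⟫ + μc / 2 * ‖y - x‖ ^ 2 ≤ F y)
    (hup : ∀ x y : H, F y ≤ F x + ⟪Fgrad x, y - x⟫ + L / 2 * ‖y - x‖ ^ 2)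
    (x y : H) :
    ‖Fgrad x - Fgrad y‖ ^ 2 + μc * L * ‖x - y‖ ^ 2
      ≤ (μc + L) * ⟪Fgrad x - Fgrad y, x - y⟫ := by
  rcases eq_or_lt_of_le hμL with hEq | hLt
  · subst hEq
    have hs := hsc x y
    have hl := hlip x y
    have hn2 : ‖Fgrad x - Fgrad y‖ ^ 2 ≤ μc ^ 2 * ‖x - y‖ ^ 2 := by
      nlinarith [norm_nonneg (Fgrad x - Fgrad y), norm_nonneg (x - y)]
    nlinarith [hs, hn2]
  · set M := L - μc with hM
    have hMpos : 0 < M := by simp [hM]; linarith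
    set h : H → ℝ := fun w => F w - μc / 2 * ‖w‖ ^ 2 with hh
    set G : H → H := fun w => Fgrad w - μc • w with hG
    have expand : ∀ a b : H, ‖b‖ ^ 2 = ‖a‖ ^ 2 + 2 * ⟪a, b - a⟫ + ‖b - a‖ ^ 2 := by
      intro a b
      have : b = a + (b - a) := by abel
      rw [this]
      rw [@norm_add_sq_real]
      simp
    have hlow' : ∀ a b : H, h a + ⟪G a, b - a⟫ ≤ h b := by
      intro a b
      have h1 := hlow a b
      have h2 := expand a b
      simp only [hh, hG, inner_sub_left, real_inner_smul_left]
      nlinarith [h1, h2]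
    have hup' : ∀ a b : H, h b ≤ h a + ⟪G a, b - a⟫ + M / 2 * ‖b - a‖ ^ 2 := by
      intro a b
      have h1 := hup a b
      have h2 := expand a b
      simp only [hh, hG, hM, inner_sub_left, real_inner_smul_left]
      nlinarith [h1, h2]
    have hc := coco hMpos hlow' hup' x y
    have eG : G x - G y = (Fgrad x - Fgrad y) - μc • (x - y) := by
      simp only [hG, smul_sub]; abel
    rw [eG, norm_sub_sq_real] at hc
    simp only [hM, inner_sub_left, real_inner_smul_right, real_inner_smul_left, norm_smul,
      Real.norm_eq_abs, abs_of_pos hμc] at hc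
    rw [show (⟪Fgrad x - Fgrad y, x - y⟫ : ℝ) = ⟪Fgrad x, x - y⟫ - ⟪Fgrad y, x - y⟫ from inner_sub_left _ _ _]
    have hself : (⟪x, x - y⟫ : ℝ) - ⟪y, x - y⟫ = ‖x - y‖ ^ 2 := by
      rw [← inner_sub_left]; exact real_inner_self_eq_norm_sq _
    have hself2 : μc * (L - μc) * ((⟪x, x - y⟫ : ℝ) - ⟪y, x - y⟫)
        = μc * (L - μc) * ‖x - y‖ ^ 2 := by rw [hself]
    nlinarith [hc, hself2]
end calc2

section calc3

variable {H : Type*} [NormedAddCommGroup H] [InnerProductSpace ℝ H]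

lemma contraction {Fgrad : H → H} {μc L α : ℝ} (hμc : 0 < μc) (hμL : μc ≤ L)
    (hsc : ∀ x y : H, μc * ‖x - y‖ ^ 2 ≤ ⟪Fgrad x - Fgrad y, x - y⟫)
    (hcomb : ∀ x y : H, ‖Fgrad x - Fgrad y‖ ^ 2 + μc * L * ‖x - y‖ ^ 2
      ≤ (μc + L) * ⟪Fgrad x - Fgrad y, x - y⟫)
    {zstar : H} (hzstar : Fgrad zstar = 0)
    (hα1 : 0 < α) (hα2 : α * (μc + L) ≤ 2) (x : H) :
    ‖x - α • Fgrad x - zstar‖ ≤ (1 - α * μc) * ‖x - zstar‖ := by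
  have hL : 0 < L := lt_of_lt_of_le hμc hμL
  have hαμ : α * μc ≤ 1 := by nlinarith
  by_cases hx : x = zstar
  · subst hx
    have hg0 : Fgrad x = 0 := hzstar
    simp [hg0]
  · set w := x - zstar with hw
    set D := Fgrad x - Fgrad zstar with hD
    have hD' : Fgrad x = D := by rw [hD, hzstar]; abel
    have ha : 0 < ‖w‖ ^ 2 := by
      have hw0 : 0 < ‖w‖ := norm_pos_iff.2 (sub_ne_zero.2 hx)
      exact pow_pos hw0 2
    have hss := hsc x zstar
    have hcc := hcomb x zstar
    have hcs : (⟪D, w⟫ : ℝ) ^ 2 ≤ ‖D‖ ^ 2 * ‖w‖ ^ 2 := by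
      have h1 := abs_real_inner_le_norm D w
      have h2 := mul_self_le_mul_self (abs_nonneg (⟪D, w⟫ : ℝ)) h1
      nlinarith [sq_abs (⟪D, w⟫ : ℝ), h2]
    have hn2 : μc ^ 2 * ‖w‖ ^ 2 ≤ ‖D‖ ^ 2 := by
      have h1 : μc * ‖w‖ ^ 2 ≤ ⟪D, w⟫ := hss
      have hs0 : 0 < (⟪D, w⟫ : ℝ) := lt_of_lt_of_le (mul_pos hμc ha) h1
      have h2 := mul_le_mul h1 h1 (mul_pos hμc ha).le hs0.le
      nlinarith [hcs, ha, h2]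
    have expand : ‖w - α • D‖ ^ 2 = ‖w‖ ^ 2 - 2 * α * ⟪D, w⟫ + α ^ 2 * ‖D‖ ^ 2 := by
      rw [norm_sub_sq_real, real_inner_smul_right, norm_smul]
      simp only [Real.norm_eq_abs, abs_of_pos hα1]
      rw [real_inner_comm w D]
      ring
    have hsq : ‖w - α • D‖ ^ 2 ≤ ((1 - α * μc) * ‖w‖) ^ 2 := by
      rw [expand]
      have hkey : 0 ≤ α * (2 - α * (μc + L)) * (‖D‖ ^ 2 - μc ^ 2 * ‖w‖ ^ 2) := by
        apply mul_nonneg (mul_nonneg hα1.le (by linarith)) (by linarith)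
      have hcomb2 : 2 * α * (‖D‖ ^ 2 + μc * L * ‖w‖ ^ 2) ≤ 2 * α * ((μc + L) * ⟪D, w⟫) := by
        apply mul_le_mul_of_nonneg_left hcc (by linarith)
      nlinarith [hkey, hcomb2, ha, hμc, hL]
    calc ‖x - α • Fgrad x - zstar‖ = ‖w - α • D‖ := by rw [hD', hw]; congr 1; abel
      _ ≤ (1 - α * μc) * ‖w‖ := by
          have h0 : 0 ≤ (1 - α * μc) * ‖w‖ := mul_nonneg (by linarith) (norm_nonneg _)
          nlinarith [hsq, norm_nonneg (w - α • D)]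
      _ = (1 - α * μc) * ‖x - zstar‖ := by rw [hw]
end calc3
end AdaptiveSamplingAux

open AdaptiveSamplingAux

set_option maxHeartbeats 2000000 in
/-- Linear convergence in expectation of the adaptive sampling gradient iteration
`z_{k+1} = z_k - α g_k` under the conditional norm-test condition (Theorem 1). -/
theorem adaptive_sampling_linear_convergence
    {H : Type*} [NormedAddCommGroup H] [InnerProductSpace ℝ H] [CompleteSpace H]
    [MeasurableSpace H] [BorelSpace H]
    (F : H → ℝ) (Fgrad : H → H) (hF : ∀ x, HasGradientAt F (Fgrad x) x)
    (μc L : ℝ) (hμc : 0 < μc) (hμL : μc ≤ L)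
    (hsc : ∀ x y : H, μc * ‖x - y‖ ^ 2 ≤ ⟪Fgrad x - Fgrad y, x - y⟫)
    (hlip : ∀ x y : H, ‖Fgrad x - Fgrad y‖ ≤ L * ‖x - y‖)
    (zstar : H) (hzstar : Fgrad zstar = 0)
    {Ω : Type*} {m0 : MeasurableSpace Ω} (P : Measure Ω) [IsProbabilityMeasure P]
    (ℱ : Filtration ℕ m0)
    (z0 : H) (z g : ℕ → Ω → H)
    (hz0 : z 0 = fun _ => z0)
    (hzmeas : ∀ k, StronglyMeasurable[ℱ k] (z k))
    (hz2 : ∀ k, MemLp (z k) 2 P) (hg2 : ∀ k, MemLp (g k) 2 P)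
    (θ α : ℝ) (hθ0 : 0 ≤ θ) (hθ : θ < μc / L)
    (hiter : ∀ k, ∀ ω, z (k + 1) ω = z k ω - α • g k ω)
    (hα : α ∈ Set.Ioc (0 : ℝ) (2 / (μc + L)))
    (hnorm : ∀ k, ∀ᵐ ω ∂P,
      (P[fun ω' => ‖g k ω' - Fgrad (z k ω')‖ ^ 2|ℱ k]) ω ≤ θ ^ 2 * ‖Fgrad (z k ω)‖ ^ 2)
    (ϱ : ℝ) (hϱ : ϱ = 1 - α * (μc - θ * L)) :
    ϱ ∈ Set.Ico (0 : ℝ) 1 ∧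
      ∀ k : ℕ, ∫ ω, ‖z k ω - zstar‖ ∂P ≤ ϱ ^ k * ‖z0 - zstar‖ := by
  obtain ⟨hα1, hα2⟩ := hα
  have hL : 0 < L := lt_of_lt_of_le hμc hμL
  have hθL : θ * L < μc := by
    rw [lt_div_iff₀ hL] at hθ; linarith
  have hθL0 : 0 ≤ θ * L := mul_nonneg hθ0 hL.le
  have hμLpos : 0 < μc + L := by linarith
  have hα2' : α * (μc + L) ≤ 2 := by
    rw [le_div_iff₀ hμLpos] at hα2; linarith
  have hαμ : α * μc ≤ 1 := by nlinarith
  have h1αμ : 0 ≤ 1 - α * μc := by linarith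
  have hϱ0 : 0 ≤ ϱ := by rw [hϱ]; nlinarith
  have hϱ1 : ϱ < 1 := by
    rw [hϱ]
    have : 0 < α * (μc - θ * L) := mul_pos hα1 (by linarith)
    linarith
  have hϱeq : ϱ = (1 - α * μc) + α * (θ * L) := by rw [hϱ]; ring
  -- deterministic ingredients
  have hlow := lower_lemma hF hsc
  have hup := descent_lemma hF hlip
  have hcomb := fun x y => combined hμc hμL hsc hlip hlow hup x y
  have hcontr := contraction hμc hμL hsc hcomb hzstar hα1 hα2'
  refine ⟨⟨hϱ0, hϱ1⟩, ?_⟩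
  -- measurability / integrability
  have contF : Continuous Fgrad := by
    have hl : LipschitzWith (Real.toNNReal L) Fgrad := by
      apply LipschitzWith.of_dist_le_mul
      intro x y
      rw [dist_eq_norm, dist_eq_norm, Real.coe_toNNReal L hL.le]
      exact hlip x y
    exact hl.continuous
  have zSM : ∀ k, AEStronglyMeasurable (z k) P :=
    fun k => ((hzmeas k).mono (ℱ.le k)).aestronglyMeasurable
  have hzz : ∀ k, MemLp (fun ω => z k ω - zstar) 2 P :=
    fun k => (hz2 k).sub (memLp_const zstar)
  have hFz : ∀ k, MemLp (fun ω => Fgrad (z k ω)) 2 P := by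
    intro k
    refine MemLp.of_le_mul (c := L) (hzz k) (contF.comp_aestronglyMeasurable (zSM k)) ?_
    filter_upwards with ω
    calc ‖Fgrad (z k ω)‖ = ‖Fgrad (z k ω) - Fgrad zstar‖ := by rw [hzstar, sub_zero]
      _ ≤ L * ‖z k ω - zstar‖ := hlip _ _
      _ = L * ‖(fun ω => z k ω - zstar) ω‖ := by norm_num
  have herr : ∀ k, MemLp (fun ω => g k ω - Fgrad (z k ω)) 2 P :=
    fun k => (hg2 k).sub (hFz k)
  have ha2 : ∀ k, MemLp (fun ω => ‖z k ω - zstar‖) 2 P := fun k => (hzz k).norm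
  have he2 : ∀ k, MemLp (fun ω => ‖g k ω - Fgrad (z k ω)‖) 2 P := fun k => (herr k).norm
  have haint : ∀ k, Integrable (fun ω => ‖z k ω - zstar‖ ^ 2) P := fun k => (ha2 k).integrable_sq
  have heint : ∀ k, Integrable (fun ω => ‖g k ω - Fgrad (z k ω)‖ ^ 2) P :=
    fun k => (he2 k).integrable_sq
  have hnint : ∀ k, Integrable (fun ω => ‖Fgrad (z k ω)‖ ^ 2) P :=
    fun k => (hFz k).norm.integrable_sq
  set A : ℕ → ℝ := fun k => ∫ ω, ‖z k ω - zstar‖ ^ 2 ∂P with hAdef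
  have hA0 : ∀ k, 0 ≤ A k := fun k => integral_nonneg (fun ω => sq_nonneg _)
  -- conditional variance bound integrated
  have hE : ∀ k, ∫ ω, ‖g k ω - Fgrad (z k ω)‖ ^ 2 ∂P ≤ (θ * L) ^ 2 * A k := by
    intro k
    have h1 : ∫ ω, ‖g k ω - Fgrad (z k ω)‖ ^ 2 ∂P
        = ∫ ω, (P[fun ω' => ‖g k ω' - Fgrad (z k ω')‖ ^ 2|ℱ k]) ω ∂P :=
      (integral_condExp (ℱ.le k)).symm
    have h2 : ∫ ω, (P[fun ω' => ‖g k ω' - Fgrad (z k ω')‖ ^ 2|ℱ k]) ω ∂P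
        ≤ ∫ ω, θ ^ 2 * ‖Fgrad (z k ω)‖ ^ 2 ∂P := by
      refine integral_mono_ae integrable_condExp ((hnint k).const_mul (θ ^ 2)) (hnorm k)
    have h3 : ∫ ω, θ ^ 2 * ‖Fgrad (z k ω)‖ ^ 2 ∂P ≤ ∫ ω, θ ^ 2 * (L ^ 2 * ‖z k ω - zstar‖ ^ 2) ∂P := by
      refine integral_mono ((hnint k).const_mul (θ ^ 2)) (((haint k).const_mul (L ^ 2)).const_mul (θ ^ 2)) ?_
      intro ω
      have hb : ‖Fgrad (z k ω)‖ ≤ L * ‖z k ω - zstar‖ := by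
        calc ‖Fgrad (z k ω)‖ = ‖Fgrad (z k ω) - Fgrad zstar‖ := by rw [hzstar, sub_zero]
          _ ≤ L * ‖z k ω - zstar‖ := hlip _ _
      have hb2 : ‖Fgrad (z k ω)‖ ^ 2 ≤ (L * ‖z k ω - zstar‖) ^ 2 :=
        pow_le_pow_left₀ (norm_nonneg _) hb 2
      exact le_trans (mul_le_mul_of_nonneg_left hb2 (sq_nonneg θ)) (le_of_eq (by ring))
    have h4 : ∫ ω, θ ^ 2 * (L ^ 2 * ‖z k ω - zstar‖ ^ 2) ∂P = (θ * L) ^ 2 * A k := by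
      rw [hAdef, ← integral_const_mul]
      refine integral_congr_ae (Filter.Eventually.of_forall fun ω => by ring)
    rw [h1, ← h4]
    exact h2.trans h3
  -- pointwise recursion bound
  have hpoint : ∀ k ω, ‖z (k + 1) ω - zstar‖
      ≤ (1 - α * μc) * ‖z k ω - zstar‖ + α * ‖g k ω - Fgrad (z k ω)‖ := by
    intro k ω
    rw [hiter k ω]
    have hsplit : z k ω - α • g k ω - zstar
        = (z k ω - α • Fgrad (z k ω) - zstar) - α • (g k ω - Fgrad (z k ω)) := by
      rw [smul_sub]; abel
    rw [hsplit]
    refine (norm_sub_le _ _).trans ?_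
    have h1 := hcontr (z k ω)
    have h2 : ‖α • (g k ω - Fgrad (z k ω))‖ = α * ‖g k ω - Fgrad (z k ω)‖ := by
      rw [norm_smul, Real.norm_eq_abs, abs_of_pos hα1]
    linarith
  -- Cauchy-Schwarz for the cross term
  have hconj : Real.HolderConjugate 2 2 := Real.HolderConjugate.two_two
  have hcast : ∀ (f : Ω → ℝ), MemLp f 2 P → MemLp f (ENNReal.ofReal 2) P := by
    intro f hf; simpa using hf
  have hCS : ∀ (u v : Ω → ℝ), (∀ ω, 0 ≤ u ω) → (∀ ω, 0 ≤ v ω) → MemLp u 2 P → MemLp v 2 P →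
      ∫ ω, u ω * v ω ∂P ≤ Real.sqrt (∫ ω, u ω ^ 2 ∂P) * Real.sqrt (∫ ω, v ω ^ 2 ∂P) := by
    intro u v hu hv hu2 hv2
    have h := integral_mul_le_Lp_mul_Lq_of_nonneg hconj
      (Filter.Eventually.of_forall hu) (Filter.Eventually.of_forall hv) (hcast u hu2) (hcast v hv2)
    have e1 : ∫ ω, u ω ^ (2 : ℝ) ∂P = ∫ ω, u ω ^ 2 ∂P :=
      integral_congr_ae (Filter.Eventually.of_forall fun ω => Real.rpow_two (u ω))
    have e2 : ∫ ω, v ω ^ (2 : ℝ) ∂P = ∫ ω, v ω ^ 2 ∂P :=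
      integral_congr_ae (Filter.Eventually.of_forall fun ω => Real.rpow_two (v ω))
    rw [e1, e2, ← Real.sqrt_eq_rpow, ← Real.sqrt_eq_rpow] at h
    exact h
  -- integrability of the cross term
  have hcross_int : ∀ k, Integrable (fun ω => ‖z k ω - zstar‖ * ‖g k ω - Fgrad (z k ω)‖) P := by
    intro k
    have hpqr : (1 : ℝ≥0∞) / 1 = 1 / 2 + 1 / 2 := by
      rw [ENNReal.div_add_div_same, one_add_one_eq_two,
        ENNReal.div_self two_ne_zero ENNReal.ofNat_ne_top, div_one]
    have h := (he2 k).smul (ha2 k) (p := 2) (q := 2) (r := 1)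
      (hpqr := ⟨by rw [inv_one]; exact ENNReal.inv_two_add_inv_two⟩)
    rw [memLp_one_iff_integrable] at h
    exact h
  -- the main recursion in L2
  have hrec : ∀ k, Real.sqrt (A (k + 1)) ≤ ϱ * Real.sqrt (A k) := by
    intro k
    set S := Real.sqrt (A k) with hS
    set E := ∫ ω, ‖g k ω - Fgrad (z k ω)‖ ^ 2 ∂P with hEdef
    set SE := Real.sqrt E with hSE
    have hE0 : 0 ≤ E := integral_nonneg fun ω => sq_nonneg _
    have hS0 : 0 ≤ S := Real.sqrt_nonneg _
    have hSE0 : 0 ≤ SE := Real.sqrt_nonneg _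
    have hSsq : S ^ 2 = A k := Real.sq_sqrt (hA0 k)
    have hSEsq : SE ^ 2 = E := Real.sq_sqrt hE0
    have hSEle : SE ≤ θ * L * S := by
      have h1 : E ≤ (θ * L) ^ 2 * A k := hE k
      have h2 := Real.sqrt_le_sqrt h1
      rw [← hSE] at h2
      calc SE ≤ Real.sqrt ((θ * L) ^ 2 * A k) := h2
        _ = θ * L * S := by
            rw [Real.sqrt_mul (sq_nonneg _), Real.sqrt_sq hθL0, hS]
    have hsum2 : MemLp (fun ω => (1 - α * μc) * ‖z k ω - zstar‖
        + α * ‖g k ω - Fgrad (z k ω)‖) 2 P :=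
      ((ha2 k).const_mul (1 - α * μc)).add ((he2 k).const_mul α)
    have h1 : A (k + 1) ≤ ∫ ω, ((1 - α * μc) * ‖z k ω - zstar‖
        + α * ‖g k ω - Fgrad (z k ω)‖) ^ 2 ∂P := by
      refine integral_mono (haint (k + 1)) hsum2.integrable_sq ?_
      intro ω
      exact pow_le_pow_left₀ (norm_nonneg _) (hpoint k ω) 2
    have h2 : ∫ ω, ((1 - α * μc) * ‖z k ω - zstar‖ + α * ‖g k ω - Fgrad (z k ω)‖) ^ 2 ∂P
        = (1 - α * μc) ^ 2 * A k
          + 2 * ((1 - α * μc) * α) * ∫ ω, ‖z k ω - zstar‖ * ‖g k ω - Fgrad (z k ω)‖ ∂P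
          + α ^ 2 * E := by
      have i1 : Integrable (fun ω => (1 - α * μc) ^ 2 * ‖z k ω - zstar‖ ^ 2) P :=
        (haint k).const_mul _
      have i2 : Integrable (fun ω => 2 * ((1 - α * μc) * α)
          * (‖z k ω - zstar‖ * ‖g k ω - Fgrad (z k ω)‖)) P := (hcross_int k).const_mul _
      have i3 : Integrable (fun ω => α ^ 2 * ‖g k ω - Fgrad (z k ω)‖ ^ 2) P :=
        (heint k).const_mul _
      have expand : ∀ ω, ((1 - α * μc) * ‖z k ω - zstar‖ + α * ‖g k ω - Fgrad (z k ω)‖) ^ 2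
          = ((1 - α * μc) ^ 2 * ‖z k ω - zstar‖ ^ 2
            + 2 * ((1 - α * μc) * α) * (‖z k ω - zstar‖ * ‖g k ω - Fgrad (z k ω)‖))
            + α ^ 2 * ‖g k ω - Fgrad (z k ω)‖ ^ 2 := fun ω => by ring
      calc ∫ ω, ((1 - α * μc) * ‖z k ω - zstar‖ + α * ‖g k ω - Fgrad (z k ω)‖) ^ 2 ∂P
          = ∫ ω, ((1 - α * μc) ^ 2 * ‖z k ω - zstar‖ ^ 2
              + 2 * ((1 - α * μc) * α) * (‖z k ω - zstar‖ * ‖g k ω - Fgrad (z k ω)‖))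
              + α ^ 2 * ‖g k ω - Fgrad (z k ω)‖ ^ 2 ∂P :=
            integral_congr_ae (Filter.Eventually.of_forall expand)
        _ = (∫ ω, (1 - α * μc) ^ 2 * ‖z k ω - zstar‖ ^ 2
              + 2 * ((1 - α * μc) * α) * (‖z k ω - zstar‖ * ‖g k ω - Fgrad (z k ω)‖) ∂P)
              + ∫ ω, α ^ 2 * ‖g k ω - Fgrad (z k ω)‖ ^ 2 ∂P := integral_add (i1.add i2) i3
        _ = ((∫ ω, (1 - α * μc) ^ 2 * ‖z k ω - zstar‖ ^ 2 ∂P)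
              + ∫ ω, 2 * ((1 - α * μc) * α) * (‖z k ω - zstar‖ * ‖g k ω - Fgrad (z k ω)‖) ∂P)
              + ∫ ω, α ^ 2 * ‖g k ω - Fgrad (z k ω)‖ ^ 2 ∂P := by rw [integral_add i1 i2]
        _ = (1 - α * μc) ^ 2 * A k
              + 2 * ((1 - α * μc) * α) * ∫ ω, ‖z k ω - zstar‖ * ‖g k ω - Fgrad (z k ω)‖ ∂P
              + α ^ 2 * E := by
            rw [integral_const_mul, integral_const_mul, integral_const_mul]
    have h3 : ∫ ω, ‖z k ω - zstar‖ * ‖g k ω - Fgrad (z k ω)‖ ∂P ≤ S * SE :=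
      hCS _ _ (fun ω => norm_nonneg _) (fun ω => norm_nonneg _) (ha2 k) (he2 k)
    have h4 : A (k + 1) ≤ (ϱ * S) ^ 2 := by
      have c1 : 0 ≤ (1 - α * μc) * α := mul_nonneg h1αμ hα1.le
      have key : A (k + 1) ≤ (1 - α * μc) ^ 2 * S ^ 2 + 2 * ((1 - α * μc) * α) * (S * SE)
          + α ^ 2 * SE ^ 2 := by
        rw [hSsq, hSEsq]
        nlinarith [h1, h2, h3, c1]
      have expand2 : (1 - α * μc) ^ 2 * S ^ 2 + 2 * ((1 - α * μc) * α) * (S * SE)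
          + α ^ 2 * SE ^ 2 = ((1 - α * μc) * S + α * SE) ^ 2 := by ring
      rw [expand2] at key
      refine key.trans ?_
      have hb : (1 - α * μc) * S + α * SE ≤ ϱ * S := by
        rw [hϱeq]
        have := mul_le_mul_of_nonneg_left hSEle hα1.le
        nlinarith
      have hnn : 0 ≤ (1 - α * μc) * S + α * SE :=
        add_nonneg (mul_nonneg h1αμ hS0) (mul_nonneg hα1.le hSE0)
      exact pow_le_pow_left₀ hnn hb 2
    calc Real.sqrt (A (k + 1)) ≤ Real.sqrt ((ϱ * S) ^ 2) := Real.sqrt_le_sqrt h4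
      _ = ϱ * S := Real.sqrt_sq (mul_nonneg hϱ0 hS0)
  -- induction
  have hAk : ∀ k, Real.sqrt (A k) ≤ ϱ ^ k * ‖z0 - zstar‖ := by
    intro k
    induction k with
    | zero =>
      have hA00 : A 0 = ‖z0 - zstar‖ ^ 2 := by
        rw [hAdef]
        simp only [hz0]
        rw [integral_const]
        simp
      rw [hA00, Real.sqrt_sq (norm_nonneg _)]
      simp
    | succ n ih =>
      calc Real.sqrt (A (n + 1)) ≤ ϱ * Real.sqrt (A n) := hrec n
        _ ≤ ϱ * (ϱ ^ n * ‖z0 - zstar‖) := mul_le_mul_of_nonneg_left ih hϱ0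
        _ = ϱ ^ (n + 1) * ‖z0 - zstar‖ := by ring
  -- conclude via Cauchy-Schwarz against 1
  intro k
  have hone : ∀ ω : Ω, (0 : ℝ) ≤ (1 : ℝ) := fun _ => zero_le_one
  have h5 : ∫ ω, ‖z k ω - zstar‖ ∂P ≤ Real.sqrt (A k) := by
    have h := hCS (fun ω => ‖z k ω - zstar‖) (fun _ => (1 : ℝ))
      (fun ω => norm_nonneg _) hone (ha2 k) (memLp_const 1)
    simpa using h
  exact h5.trans (hAk k)
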